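/- For every integer n ≥ 1 and every signed permutation w of [±n], the number of connected components of the open set {x ∈ ℝ^n : x_{w(-n)} > x_{w(-n+1)} > ⋯ > x_{w(-1)} > x_{w(1)} > ⋯ > x_{w(n)} (where x_{-i} := -x_i), and x_i − x_j ≠ 1, x_i + x_j ≠ 1 for all 1 ≤ i < j ≤ n, and 2x_k ≠ 1 for all 1 ≤ k ≤ n} equals j(Q^C_w), the number of symmetric antichains of the poset Q^C_w. -/

import Mathlib

/-- The set `[±n] = {-n, …, -1, 1, …, n}` inside `ℤ`. -/
def pmSet (n : ℕ) : Set ℤ :=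
  {i | i ≠ 0 ∧ |i| ≤ (n : ℤ)}

/-- `w : ℤ → ℤ` encodes a signed permutation of `[±n]`: it restricts to a bijection of
`[±n]`, satisfies `w(-i) = -w(i)`, and (as a normalization) fixes everything outside
`[±n]`. -/
def IsSignedPerm (n : ℕ) (w : ℤ → ℤ) : Prop :=
  Set.BijOn w (pmSet n) (pmSet n) ∧ (∀ i : ℤ, w (-i) = -w i) ∧
    ∀ i ∉ pmSet n, w i = i

/-- `(i,j)` is an element of the poset `Q^C_w`. -/
def QCmem (n : ℕ) (w : ℤ → ℤ) (p : ℤ × ℤ) : Prop :=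
  p.1 ∈ pmSet n ∧ p.2 ∈ pmSet n ∧ p.1 < p.2 ∧
    ((0 < w p.1 ∧ w p.1 ≤ |w p.2|) ∨ (0 < w (-p.2) ∧ w (-p.2) ≤ |w (-p.1)|))

/-- The partial order of `Q^C_w`: `(i,j) ≤ (r,s)` iff `r ≤ i` and `j ≤ s`. -/
def QCle (p q : ℤ × ℤ) : Prop :=
  q.1 ≤ p.1 ∧ p.2 ≤ q.2

/-- `A` is a symmetric antichain of `Q^C_w`: a set of pairwise incomparable elements
of `Q^C_w` closed under the involution `σ : (i,j) ↦ (-j,-i)`. -/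
def IsSymAntichainQC (n : ℕ) (w : ℤ → ℤ) (A : Set (ℤ × ℤ)) : Prop :=
  (∀ p ∈ A, QCmem n w p) ∧
    (∀ p ∈ A, ∀ q ∈ A, p ≠ q → ¬QCle p q ∧ ¬QCle q p) ∧
    ∀ p ∈ A, ((-p.2, -p.1) : ℤ × ℤ) ∈ A

/-- `j(Q^C_w)`: the number of symmetric antichains of `Q^C_w`. -/
noncomputable def jQC (n : ℕ) (w : ℤ → ℤ) : ℕ :=
  Nat.card {A : Set (ℤ × ℤ) // IsSymAntichainQC n w A}

/-- The coordinate functions `x_m` for `m ∈ [±n]`, with `x_{-i} = -x_i`. -/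
def signedCoord (n : ℕ) (x : Fin n → ℝ) (m : ℤ) : ℝ :=
  if h : 0 < m ∧ m ≤ (n : ℤ) then x ⟨(m - 1).toNat, by omega⟩
  else if h' : 0 < -m ∧ -m ≤ (n : ℤ) then -x ⟨(-m - 1).toNat, by omega⟩
  else 0

/-- The part of the complement of the type `C_n` Shi arrangement inside the cone
`wC^{BC}`: points with `x_{w(-n)} > ⋯ > x_{w(-1)} > x_{w(1)} > ⋯ > x_{w(n)}` and
avoiding the affine hyperplanes `xᵢ - xⱼ = 1`, `xᵢ + xⱼ = 1` (`i < j`), `2xₖ = 1`. -/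
def coneShiC (n : ℕ) (w : ℤ → ℤ) : Set (Fin n → ℝ) :=
  {x | (∀ i j : ℤ, i ∈ pmSet n → j ∈ pmSet n → i < j →
          signedCoord n x (w j) < signedCoord n x (w i)) ∧
       (∀ i j : Fin n, i < j → x i - x j ≠ 1 ∧ x i + x j ≠ 1) ∧
       ∀ k : Fin n, 2 * x k ≠ 1}


namespace ShiC

/-- the involution σ -/
def sig (p : ℤ × ℤ) : ℤ × ℤ := (-p.2, -p.1)

lemma sig_sig (p : ℤ × ℤ) : sig (sig p) = p := by simp [sig]

lemma qcle_refl (p : ℤ × ℤ) : QCle p p := ⟨le_refl _, le_refl _⟩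

lemma qcle_trans {p q r : ℤ × ℤ} (h : QCle p q) (h' : QCle q r) : QCle p r :=
  ⟨h'.1.trans h.1, h.2.trans h'.2⟩

lemma qcle_antisymm {p q : ℤ × ℤ} (h : QCle p q) (h' : QCle q p) : p = q :=
  Prod.ext (le_antisymm h'.1 h.1) (le_antisymm h.2 h'.2)

lemma qcle_sig {p q : ℤ × ℤ} (h : QCle p q) : QCle (sig p) (sig q) := by
  obtain ⟨h1, h2⟩ := h
  exact ⟨by simp [ShiC.sig]; omega, by simp [ShiC.sig]; omega⟩

lemma qcmem_sig {n : ℕ} {w : ℤ → ℤ} {p : ℤ × ℤ} (h : QCmem n w p) :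
    QCmem n w (sig p) := by
  obtain ⟨h1, h2, h3, h4⟩ := h
  refine ⟨?_, ?_, by simp [ShiC.sig]; omega, ?_⟩
  · simpa [ShiC.sig, pmSet, abs_neg] using ⟨h2.1, h2.2⟩
  · simpa [ShiC.sig, pmSet, abs_neg] using ⟨h1.1, h1.2⟩
  · simp only [ShiC.sig]
    rcases h4 with h4 | h4
    · right; simpa using h4
    · left; simpa using h4

/-- symmetric filters of Q^C_w -/
def SymFilter (n : ℕ) (w : ℤ → ℤ) (F : Set (ℤ × ℤ)) : Prop :=
  (∀ p ∈ F, QCmem n w p) ∧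
    (∀ p ∈ F, ∀ q, QCmem n w q → QCle p q → q ∈ F) ∧
    ∀ p ∈ F, sig p ∈ F

def minimals (F : Set (ℤ × ℤ)) : Set (ℤ × ℤ) :=
  {p ∈ F | ∀ q ∈ F, QCle q p → q = p}

def upclo (n : ℕ) (w : ℤ → ℤ) (A : Set (ℤ × ℤ)) : Set (ℤ × ℤ) :=
  {q | QCmem n w q ∧ ∃ a ∈ A, QCle a q}

lemma exists_minimal_le {n : ℕ} {w : ℤ → ℤ} {F : Set (ℤ × ℤ)}
    (hQ : ∀ p ∈ F, QCmem n w p) (p : ℤ × ℤ) (hp : p ∈ F) :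
    ∃ a ∈ minimals F, QCle a p := by
  obtain ⟨k, hk⟩ : ∃ k : ℕ, (p.2 - p.1).toNat = k := ⟨_, rfl⟩
  induction k using Nat.strong_induction_on generalizing p with
  | _ k ih =>
    by_cases hmin : ∀ q ∈ F, QCle q p → q = p
    · exact ⟨p, ⟨hp, hmin⟩, qcle_refl p⟩
    · push_neg at hmin
      obtain ⟨q, hqF, hqle, hqne⟩ := hmin
      have hlt : (q.2 - q.1).toNat < k := by
        obtain ⟨h1, h2⟩ := hqle
        have hq12 : q.1 < q.2 := (hQ q hqF).2.2.1
        have hp12 : p.1 < p.2 := (hQ p hp).2.2.1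
        have : q.1 ≠ p.1 ∨ q.2 ≠ p.2 := by
          by_contra h; push_neg at h; exact hqne (Prod.ext h.1 h.2)
        omega
      obtain ⟨a, haM, hale⟩ := ih _ hlt q hqF rfl
      exact ⟨a, haM, qcle_trans hale hqle⟩

lemma minimals_antichain {n : ℕ} {w : ℤ → ℤ} {F : Set (ℤ × ℤ)}
    (hF : SymFilter n w F) : IsSymAntichainQC n w (minimals F) := by
  obtain ⟨hQ, hup, hsig⟩ := hF
  refine ⟨fun p hp => hQ p hp.1, ?_, ?_⟩
  · intro p hp q hq hne
    constructor
    · intro hle; exact hne (hq.2 p hp.1 hle)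
    · intro hle; exact hne ((hp.2 q hq.1 hle).symm)
  · intro p hp
    refine ⟨hsig p hp.1, ?_⟩
    intro q hq hle
    have h2 : QCle (sig q) (sig (sig p)) := qcle_sig hle
    rw [sig_sig] at h2
    have := hp.2 (sig q) (hsig q hq) h2
    calc q = sig (sig q) := (sig_sig q).symm
      _ = sig p := by rw [this]

lemma upclo_symfilter {n : ℕ} {w : ℤ → ℤ} {A : Set (ℤ × ℤ)}
    (hA : IsSymAntichainQC n w A) : SymFilter n w (upclo n w A) := by
  obtain ⟨hQ, hanti, hsig⟩ := hA
  refine ⟨fun p hp => hp.1, ?_, ?_⟩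
  · rintro p ⟨hpQ, a, haA, hale⟩ q hqQ hle
    exact ⟨hqQ, a, haA, qcle_trans hale hle⟩
  · rintro p ⟨hpQ, a, haA, hale⟩
    exact ⟨qcmem_sig hpQ, sig a, hsig a haA, qcle_sig hale⟩

lemma upclo_minimals {n : ℕ} {w : ℤ → ℤ} {F : Set (ℤ × ℤ)}
    (hF : SymFilter n w F) : upclo n w (minimals F) = F := by
  obtain ⟨hQ, hup, hsig⟩ := hF
  ext p
  constructor
  · rintro ⟨hpQ, a, haA, hale⟩
    exact hup a haA.1 p hpQ hale
  · intro hp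
    obtain ⟨a, haM, hale⟩ := exists_minimal_le hQ p hp
    exact ⟨hQ p hp, a, haM, hale⟩

lemma minimals_upclo {n : ℕ} {w : ℤ → ℤ} {A : Set (ℤ × ℤ)}
    (hA : IsSymAntichainQC n w A) : minimals (upclo n w A) = A := by
  obtain ⟨hQ, hanti, hsig⟩ := hA
  have hAsub : A ⊆ upclo n w A := fun a ha => ⟨hQ a ha, a, ha, qcle_refl a⟩
  ext p
  constructor
  · rintro ⟨⟨hpQ, a, haA, hale⟩, hmin⟩
    have := hmin a (hAsub haA) hale
    rwa [← this]
  · intro hp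
    refine ⟨hAsub hp, ?_⟩
    rintro q ⟨hqQ, a, haA, haq⟩ hqp
    have hap : QCle a p := qcle_trans haq hqp
    have : a = p := by
      by_contra hne
      exact (hanti a haA p hp hne).1 hap
    subst this
    exact qcle_antisymm hqp haq
  
/-- the equivalence between symmetric filters and symmetric antichains -/
noncomputable def filterAntichainEquiv (n : ℕ) (w : ℤ → ℤ) :
    {F : Set (ℤ × ℤ) // SymFilter n w F} ≃ {A : Set (ℤ × ℤ) // IsSymAntichainQC n w A} where
  toFun F := ⟨minimals F.1, minimals_antichain F.2⟩
  invFun A := ⟨upclo n w A.1, upclo_symfilter A.2⟩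
  left_inv F := Subtype.ext (upclo_minimals F.2)
  right_inv A := Subtype.ext (minimals_upclo A.2)

/-! ### Part B : realization of symmetric filters by points -/

def Wit (n : ℕ) (w : ℤ → ℤ) (F : Set (ℤ × ℤ)) (p q : ℤ) : Prop :=
  ∃ r : ℤ × ℤ, QCmem n w r ∧ r ∉ F ∧ r.1 ≤ p ∧ q ≤ r.2

def Bk (k : ℕ) : Set ℤ := {i : ℤ | i ≠ 0 ∧ |i| ≤ (k : ℤ)}

lemma mem_Bk {k : ℕ} {i : ℤ} : i ∈ Bk k ↔ (i ≠ 0 ∧ -(k : ℤ) ≤ i ∧ i ≤ (k : ℤ)) := by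
  simp [Bk, abs_le]

structure Good (n : ℕ) (w : ℤ → ℤ) (F : Set (ℤ × ℤ)) (k : ℕ) (z : ℤ → ℝ) : Prop where
  odd : ∀ i, z (-i) = -z i
  mono : ∀ i j, i ∈ Bk k → j ∈ Bk k → i < j → z j < z i
  gtF : ∀ p ∈ F, p.1 ∈ Bk k → p.2 ∈ Bk k → 1 < z p.1 - z p.2
  inv : ∀ p q : ℤ, p ∈ Bk k → q ∈ Bk k → p < q → Wit n w F p q → z p - z q < 1

lemma exists_between (L U : Set ℝ) (hL : L.Finite) (hU : U.Finite) (hne : L.Nonempty)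
    (h : ∀ l ∈ L, ∀ u ∈ U, l < u) : ∃ v, (∀ l ∈ L, l < v) ∧ (∀ u ∈ U, v < u) := by
  rcases U.eq_empty_or_nonempty with hUe | hUne
  · refine ⟨sSup L + 1, fun l hl => ?_, fun u hu => by simp [hUe] at hu⟩
    have := le_csSup hL.bddAbove hl
    linarith
  · refine ⟨(sSup L + sInf U) / 2, fun l hl => ?_, fun u hu => ?_⟩
    · have h1 := le_csSup hL.bddAbove hl
      have h2 := h _ (hne.csSup_mem hL) _ (hUne.csInf_mem hU)
      linarith
    · have h1 := csInf_le hU.bddBelow hu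
      have h2 := h _ (hne.csSup_mem hL) _ (hUne.csInf_mem hU)
      linarith

lemma good_zero (n : ℕ) (w : ℤ → ℤ) (F : Set (ℤ × ℤ)) : Good n w F 0 (fun _ => 0) := by
  refine ⟨fun i => by simp, ?_, ?_, ?_⟩
  · intro i j hi _ _; exfalso; rw [mem_Bk] at hi; omega
  · intro p _ hp _; exfalso; rw [mem_Bk] at hp; omega
  · intro p q hp _ _ _; exfalso; rw [mem_Bk] at hp; omega

lemma good_step {n : ℕ} {w : ℤ → ℤ} {F : Set (ℤ × ℤ)} {k : ℕ} {z : ℤ → ℝ}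
    (hF : SymFilter n w F) (hz : Good n w F k z) :
    ∃ z', Good n w F (k + 1) z' := by
  obtain ⟨hQ, hup, hs⟩ := hF
  obtain ⟨hodd, hmono, hgtF, hinv⟩ := hz
  set t : ℤ := -((k : ℤ) + 1) with ht
  set m : ℤ := (k : ℤ) + 1 with hm
  have hsigF : ∀ r : ℤ × ℤ, r ∉ F → sig r ∉ F := by
    intro r hr hcon
    exact hr (by simpa [sig_sig] using hs _ hcon)
  have hz0 : z 0 = 0 := by have := hodd 0; simp at this; linarith
  have hposk : ∀ i ∈ Bk k, i < 0 → 0 < z i := by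
    intro i hi hi0
    have h1 : z i > z (-i) := hmono i (-i) hi (by rw [mem_Bk] at hi ⊢; omega) (by omega)
    rw [hodd] at h1; linarith
  have hnegk : ∀ i ∈ Bk k, 0 < i → z i < 0 := by
    intro i hi hi0
    have h1 : z (-i) > z i := hmono (-i) i (by rw [mem_Bk] at hi ⊢; omega) hi (by omega)
    rw [hodd] at h1; linarith
  have hzk0 : 0 ≤ z (-(k : ℤ)) := by
    rcases Nat.eq_zero_or_pos k with hk0 | hk0
    · subst hk0; simp [hz0]
    · exact le_of_lt (hposk _ (by rw [mem_Bk]; omega) (by omega))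
  have hzkge : ∀ j ∈ Bk k, z j ≤ z (-(k : ℤ)) := by
    intro j hj
    have hj' := hj
    rw [mem_Bk] at hj'
    rcases eq_or_lt_of_le (by omega : -(k : ℤ) ≤ j) with he | hlt
    · rw [← he]
    · exact le_of_lt (hmono _ _ (by rw [mem_Bk]; omega) hj hlt)
  -- bound sets
  set L : Set ℝ := insert (z (-(k : ℤ)))
      ({v | ∃ a ∈ Bk k, ((t, a) : ℤ × ℤ) ∈ F ∧ v = 1 + z a} ∪
       {v | ∃ a ∈ Bk k, ((a, m) : ℤ × ℤ) ∈ F ∧ v = 1 - z a} ∪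
       {v | ((t, m) : ℤ × ℤ) ∈ F ∧ v = 1 / 2}) with hL
  set U : Set ℝ := ({v | ∃ q ∈ Bk k, Wit n w F t q ∧ v = 1 + z q} ∪
       {v | ∃ p ∈ Bk k, Wit n w F p m ∧ v = 1 - z p} ∪
       {v | Wit n w F t m ∧ v = 1 / 2}) with hU
  have hBfin : (Bk k).Finite := by
    apply (Set.finite_Icc (-(k : ℤ)) (k : ℤ)).subset
    intro i hi; rw [mem_Bk] at hi; simp [Set.mem_Icc]; omega
  have hsub1 : ∀ (c : ℝ → ℝ) (P : ℤ → Prop),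
      {v : ℝ | ∃ a ∈ Bk k, P a ∧ v = c (z a)}.Finite := by
    intro c P
    apply ((hBfin.image (fun a => c (z a)))).subset
    rintro v ⟨a, haB, _, rfl⟩
    exact ⟨a, haB, rfl⟩
  have hLfin : L.Finite := by
    apply Set.Finite.insert
    apply Set.Finite.union
    apply Set.Finite.union
    · exact hsub1 (fun x => 1 + x) _
    · exact hsub1 (fun x => 1 - x) _
    · exact (Set.finite_singleton (1 / 2 : ℝ)).subset (by rintro v ⟨_, rfl⟩; rfl)
  have hUfin : U.Finite := by
    apply Set.Finite.union
    apply Set.Finite.union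
    · exact hsub1 (fun x => 1 + x) _
    · exact hsub1 (fun x => 1 - x) _
    · exact (Set.finite_singleton (1 / 2 : ℝ)).subset (by rintro v ⟨_, rfl⟩; rfl)
  have hLne : L.Nonempty := ⟨_, Set.mem_insert _ _⟩
  -- the key feasibility estimate
  have key : ∀ l ∈ L, ∀ u ∈ U, l < u := by
    intro l hl u hu
    simp only [hL, hU, Set.mem_insert_iff, Set.mem_union, Set.mem_setOf_eq] at hl hu
    have hmB : ∀ a ∈ Bk k, a < m ∧ t < a ∧ -a ∈ Bk k ∧ a ≠ 0 ∧ -(k:ℤ) ≤ a ∧ a ≤ (k:ℤ) := by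
      intro a ha; rw [mem_Bk] at ha
      refine ⟨by omega, by omega, by rw [mem_Bk]; omega, by omega, by omega, by omega⟩
    rcases hu with ((⟨q, hqB, ⟨r, hrQ, hrF, hr1, hr2⟩, rfl⟩ |
                    ⟨p, hpB, ⟨r, hrQ, hrF, hr1, hr2⟩, rfl⟩) |
                    ⟨⟨r, hrQ, hrF, hr1, hr2⟩, rfl⟩)
    · -- u = 1 + z q,   witness for (t,q)
      obtain ⟨hqm, hqt, hqnB, hq0, hql, hqu⟩ := hmB q hqB
      rcases hl with rfl | ((⟨a, haB, haF, rfl⟩ | ⟨a, haB, haF, rfl⟩) | ⟨haF, rfl⟩)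
      · -- l = z(-k)
        rcases eq_or_lt_of_le (by omega : -(k:ℤ) ≤ q) with he | hlt
        · rw [← he]; linarith
        · have := hinv (-(k:ℤ)) q (by rw [mem_Bk]; omega) hqB hlt
            ⟨r, hrQ, hrF, by omega, hr2⟩
          linarith
      · -- l = 1 + z a, (t,a) ∈ F
        obtain ⟨ham, hat, hanB, ha0, hal, hau⟩ := hmB a haB
        have hra : r.2 < a := by
          by_contra hcon
          exact hrF (hup _ haF r hrQ ⟨hr1, by omega⟩)
        have := hmono q a hqB haB (by omega)
        linarith
      · -- l = 1 - z a, (a,m) ∈ F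
        obtain ⟨ham, hat, hanB, ha0, hal, hau⟩ := hmB a haB
        have hqa : q < -a := by
          by_contra hcon
          have hsg : ((t, -a) : ℤ × ℤ) ∈ F := by
            have := hs _ haF
            simpa [sig, ht, hm] using this
          exact hrF (hup _ hsg r hrQ ⟨hr1, by omega⟩)
        have := hmono q (-a) hqB hanB hqa
        rw [hodd] at this
        linarith
      · -- l = 1/2, (t,m) ∈ F
        rcases lt_or_gt_of_ne hq0 with hq0' | hq0'
        · have := hposk q hqB hq0'; linarith
        · have := hinv (-q) q hqnB hqB (by omega) ⟨r, hrQ, hrF, by omega, hr2⟩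
          rw [hodd] at this
          linarith
    · -- u = 1 - z p,   witness for (p,m)
      obtain ⟨hpm, hpt, hpnB, hp0, hpl, hpu⟩ := hmB p hpB
      rcases hl with rfl | ((⟨a, haB, haF, rfl⟩ | ⟨a, haB, haF, rfl⟩) | ⟨haF, rfl⟩)
      · -- l = z(-k)
        rcases eq_or_lt_of_le (by omega : -(k:ℤ) ≤ -p) with he | hlt
        · have hpk : p = (k : ℤ) := by omega
          subst hpk
          have := hodd (k : ℤ)
          linarith
        · have := hinv (-(k:ℤ)) (-p) (by rw [mem_Bk]; omega) hpnB hlt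
            ⟨sig r, qcmem_sig hrQ, hsigF r hrF, by simp [sig]; omega, by simp [sig]; omega⟩
          rw [hodd p] at this
          linarith
      · -- l = 1 + z a, (t,a) ∈ F
        obtain ⟨ham, hat, hanB, ha0, hal, hau⟩ := hmB a haB
        have hpa : -p < a := by
          by_contra hcon
          have hsg : ((-a, m) : ℤ × ℤ) ∈ F := by
            have := hs _ haF
            simpa [sig, ht, hm] using this
          exact hrF (hup _ hsg r hrQ ⟨by omega, hr2⟩)
        have := hmono (-p) a hpnB haB hpa
        rw [hodd] at this
        linarith
      · -- l = 1 - z a, (a,m) ∈ F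
        obtain ⟨ham, hat, hanB, ha0, hal, hau⟩ := hmB a haB
        have hap : a < p := by
          by_contra hcon
          exact hrF (hup _ haF r hrQ ⟨by omega, hr2⟩)
        have := hmono a p haB hpB hap
        linarith
      · -- l = 1/2, (t,m) ∈ F
        rcases lt_or_gt_of_ne hp0 with hp0' | hp0'
        · have := hinv p (-p) hpB hpnB (by omega)
            ⟨sig r, qcmem_sig hrQ, hsigF r hrF, by simp [sig]; omega, by simp [sig]; omega⟩
          rw [hodd] at this
          linarith
        · have := hnegk p hpB hp0'; linarith
    · -- u = 1/2,   witness for (t,m)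
      rcases hl with rfl | ((⟨a, haB, haF, rfl⟩ | ⟨a, haB, haF, rfl⟩) | ⟨haF, rfl⟩)
      · -- l = z(-k)
        rcases Nat.eq_zero_or_pos k with hk0 | hk0
        · subst hk0
          norm_num [hz0]
        · have := hinv (-(k:ℤ)) (k:ℤ) (by rw [mem_Bk]; omega) (by rw [mem_Bk]; omega)
            (by omega) ⟨r, hrQ, hrF, by omega, by omega⟩
          have h2 := hodd (k : ℤ)
          linarith
      · -- l = 1 + z a : impossible
        obtain ⟨ham, hat, hanB, ha0, hal, hau⟩ := hmB a haB
        exact absurd (hup _ haF r hrQ ⟨hr1, by omega⟩) hrF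
      · -- l = 1 - z a : impossible
        obtain ⟨ham, hat, hanB, ha0, hal, hau⟩ := hmB a haB
        have hsg : ((t, -a) : ℤ × ℤ) ∈ F := by
          have := hs _ haF
          simpa [sig, ht, hm] using this
        exact absurd (hup _ hsg r hrQ ⟨hr1, by omega⟩) hrF
      · -- l = 1/2 : impossible
        exact absurd (hup _ haF r hrQ ⟨hr1, hr2⟩) hrF
  obtain ⟨v, hvL, hvU⟩ := exists_between L U hLfin hUfin hLne key
  have hvzk : z (-(k : ℤ)) < v := hvL _ (Set.mem_insert _ _)
  have hv0 : 0 < v := lt_of_le_of_lt hzk0 hvzk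
  -- the extension
  set z' : ℤ → ℝ := fun i => if i = t then v else if i = m then -v else z i with hz'
  have htm : t ≠ m := by omega
  have hz't : z' t = v := by simp [hz']
  have hz'm : z' m = -v := by simp only [hz']; rw [if_neg (Ne.symm htm)]; simp
  have hz'B : ∀ i ∈ Bk k, z' i = z i := by
    intro i hi; rw [mem_Bk] at hi
    simp only [hz']
    rw [if_neg (by omega), if_neg (by omega)]
  have hmemB : ∀ i : ℤ, i ∈ Bk (k + 1) ↔ (i ∈ Bk k ∨ i = t ∨ i = m) := by
    intro i
    rw [mem_Bk, mem_Bk]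
    push_cast
    omega
  refine ⟨z', ?_, ?_, ?_, ?_⟩
  · -- odd
    intro i
    rcases eq_or_ne i t with rfl | hit
    · rw [hz't, (by omega : -t = m), hz'm]
    · rcases eq_or_ne i m with rfl | him
      · rw [hz'm, (by omega : -m = t), hz't]; ring
      · have h1 : -i ≠ t := by omega
        have h2 : -i ≠ m := by omega
        simp only [hz']
        rw [if_neg h1, if_neg h2, if_neg hit, if_neg him]
        exact hodd i
  · -- mono
    intro i j hi hj hij
    rw [hmemB] at hi hj
    rcases hi with hi | hi | hi
    · -- i ∈ Bk k
      have hiB := hi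
      rw [mem_Bk] at hi
      rcases hj with hj | hj | hj
      · rw [hz'B _ hiB, hz'B _ hj]; exact hmono i j hiB hj hij
      · exfalso; omega
      · subst hj
        rw [hz'B _ hiB, hz'm]
        have h3 : z (-i) < v :=
          lt_of_le_of_lt (hzkge _ (by rw [mem_Bk]; omega)) hvzk
        rw [hodd] at h3
        linarith
    · -- i = t
      subst hi
      rw [hz't]
      rcases hj with hj | hj | hj
      · rw [hz'B _ hj]
        exact lt_of_le_of_lt (hzkge _ hj) hvzk
      · exfalso; omega
      · subst hj; rw [hz'm]; linarith
    · -- i = m : impossible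
      exfalso
      subst hi
      rcases hj with hj | hj | hj
      · rw [mem_Bk] at hj; omega
      · omega
      · omega
  · -- gtF
    intro p hpF hp1 hp2
    have hpQ := hQ p hpF
    have hp12 : p.1 < p.2 := hpQ.2.2.1
    rw [hmemB] at hp1 hp2
    rcases hp1 with hp1 | hp1 | hp1
    · have hp1' := hp1
      rw [mem_Bk] at hp1'
      rcases hp2 with hp2 | hp2 | hp2
      · rw [hz'B _ hp1, hz'B _ hp2]; exact hgtF p hpF hp1 hp2
      · exfalso; omega
      · -- (a, m) ∈ F
        rw [hz'B _ hp1, hp2, hz'm]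
        have hlv : (1 : ℝ) - z p.1 < v := by
          apply hvL
          apply Set.mem_insert_of_mem
          refine Or.inl (Or.inr ⟨p.1, hp1, ?_, rfl⟩)
          have : ((p.1, m) : ℤ × ℤ) = p := by rw [← hp2]
          rwa [this]
        linarith
    · rcases hp2 with hp2 | hp2 | hp2
      · -- (t, a) ∈ F
        rw [hp1, hz't, hz'B _ hp2]
        have hlv : (1 : ℝ) + z p.2 < v := by
          apply hvL
          apply Set.mem_insert_of_mem
          refine Or.inl (Or.inl ⟨p.2, hp2, ?_, rfl⟩)
          have : ((t, p.2) : ℤ × ℤ) = p := by rw [← hp1]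
          rwa [this]
        linarith
      · exfalso; omega
      · -- (t, m) ∈ F
        rw [hp1, hp2, hz't, hz'm]
        have hlv : (1 : ℝ) / 2 < v := by
          apply hvL
          apply Set.mem_insert_of_mem
          refine Or.inr ⟨?_, rfl⟩
          have : ((t, m) : ℤ × ℤ) = p := by rw [← hp1, ← hp2]
          rwa [this]
        linarith
    · -- p.1 = m : impossible
      exfalso
      rcases hp2 with hp2 | hp2 | hp2
      · rw [mem_Bk] at hp2; omega
      · omega
      · omega
  · -- inv
    intro p q hp hq hpq hWit
    rw [hmemB] at hp hq
    rcases hp with hp | hp | hp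
    · have hp' := hp
      rw [mem_Bk] at hp'
      rcases hq with hq | hq | hq
      · rw [hz'B _ hp, hz'B _ hq]; exact hinv p q hp hq hpq hWit
      · exfalso; omega
      · -- (p, m)
        rw [hz'B _ hp, hq, hz'm]
        have huv : v < 1 - z p := by
          apply hvU
          refine Or.inl (Or.inr ⟨p, hp, ?_, rfl⟩)
          rwa [← hq]
        linarith
    · rcases hq with hq | hq | hq
      · -- (t, q)
        rw [hp, hz't, hz'B _ hq]
        have huv : v < 1 + z q := by
          apply hvU
          refine Or.inl (Or.inl ⟨q, hq, ?_, rfl⟩)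
          rwa [← hp]
        linarith
      · exfalso; omega
      · -- (t, m)
        rw [hp, hq, hz't, hz'm]
        have huv : v < 1 / 2 := by
          apply hvU
          refine Or.inr ⟨?_, rfl⟩
          rw [← hp, ← hq]; exact hWit
        linarith
    · exfalso
      rcases hq with hq | hq | hq
      · rw [mem_Bk] at hq; omega
      · omega
      · omega

lemma exists_good (n : ℕ) {w : ℤ → ℤ} {F : Set (ℤ × ℤ)} (hF : SymFilter n w F) :
    ∃ z, Good n w F n z := by
  suffices h : ∀ k : ℕ, ∃ z, Good n w F k z from h n
  intro k
  induction k with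
  | zero => exact ⟨_, good_zero n w F⟩
  | succ k ih =>
    obtain ⟨z, hz⟩ := ih
    exact good_step hF hz

/-! ### Part C : geometry of the cone -/

lemma mem_pm {n : ℕ} {i : ℤ} : i ∈ pmSet n ↔ (i ≠ 0 ∧ -(n : ℤ) ≤ i ∧ i ≤ (n : ℤ)) := by
  simp [pmSet, abs_le]

lemma pm_neg {n : ℕ} {i : ℤ} (h : i ∈ pmSet n) : -i ∈ pmSet n := by
  rw [mem_pm] at h ⊢; omega

lemma signedCoord_pos {n : ℕ} {x : Fin n → ℝ} {a : ℤ} (h1 : 0 < a) (h2 : a ≤ (n : ℤ)) :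
    signedCoord n x a = x ⟨(a - 1).toNat, by omega⟩ := by
  rw [signedCoord, dif_pos ⟨h1, h2⟩]

lemma signedCoord_negval {n : ℕ} {x : Fin n → ℝ} {a : ℤ} (h1 : a < 0) (h2 : -a ≤ (n : ℤ)) :
    signedCoord n x a = -x ⟨(-a - 1).toNat, by omega⟩ := by
  rw [signedCoord, dif_neg (by omega), dif_pos ⟨by omega, h2⟩]

lemma signedCoord_neg {n : ℕ} (x : Fin n → ℝ) (m : ℤ) :
    signedCoord n x (-m) = -signedCoord n x m := by
  by_cases h1 : 0 < m ∧ m ≤ (n : ℤ)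
  · rw [signedCoord_pos h1.1 h1.2, signedCoord_negval (by omega) (by omega)]
    simp only [neg_neg]
  · by_cases h2 : 0 < -m ∧ -m ≤ (n : ℤ)
    · rw [signedCoord_pos h2.1 h2.2, signedCoord_negval (by omega) (by omega), neg_neg]
    · rw [signedCoord, dif_neg h2, dif_neg (by omega), signedCoord, dif_neg h1,
        dif_neg (by omega)]
      simp

lemma signedCoord_comb {n : ℕ} (x y : Fin n → ℝ) (s u : ℝ) (m : ℤ) :
    signedCoord n (s • x + u • y) m = s * signedCoord n x m + u * signedCoord n y m := by
  by_cases h1 : 0 < m ∧ m ≤ (n : ℤ)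
  · rw [signedCoord_pos h1.1 h1.2, signedCoord_pos h1.1 h1.2, signedCoord_pos h1.1 h1.2]
    simp [Pi.add_apply, Pi.smul_apply, smul_eq_mul]
  · by_cases h2 : 0 < -m ∧ -m ≤ (n : ℤ)
    · rw [signedCoord_negval (by omega) h2.2, signedCoord_negval (by omega) h2.2,
        signedCoord_negval (by omega) h2.2]
      simp [Pi.add_apply, Pi.smul_apply, smul_eq_mul]; ring
    · rw [signedCoord, dif_neg h1, dif_neg h2, signedCoord, dif_neg h1, dif_neg h2,
        signedCoord, dif_neg h1, dif_neg h2]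
      ring

lemma continuous_signedCoord (n : ℕ) (m : ℤ) :
    Continuous (fun x : Fin n → ℝ => signedCoord n x m) := by
  by_cases h1 : 0 < m ∧ m ≤ (n : ℤ)
  · simp only [signedCoord, dif_pos h1]; exact continuous_apply _
  · simp only [signedCoord, dif_neg h1]
    by_cases h2 : 0 < -m ∧ -m ≤ (n : ℤ)
    · simp only [dif_pos h2]; exact (continuous_apply _).neg
    · simp only [dif_neg h2]; exact continuous_const

/-- the functional `z_i(x) = x_{w(i)}` -/
def Zc (n : ℕ) (w : ℤ → ℤ) (x : Fin n → ℝ) (i : ℤ) : ℝ := signedCoord n x (w i)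

lemma Zc_neg {n : ℕ} {w : ℤ → ℤ} (hw : IsSignedPerm n w) (x : Fin n → ℝ) (i : ℤ) :
    Zc n w x (-i) = -Zc n w x i := by
  rw [Zc, Zc, hw.2.1 i, signedCoord_neg]

/-- the separation pattern of a point -/
def phi (n : ℕ) (w : ℤ → ℤ) (x : Fin n → ℝ) : Set (ℤ × ℤ) :=
  {p | QCmem n w p ∧ 1 < Zc n w x p.1 - Zc n w x p.2}

lemma chamber_of_cone {n : ℕ} {w : ℤ → ℤ} {x : Fin n → ℝ} (hx : x ∈ coneShiC n w) :
    ∀ i j : ℤ, i ∈ pmSet n → j ∈ pmSet n → i < j → Zc n w x j < Zc n w x i := hx.1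

lemma qc_ne_one_aux {n : ℕ} {w : ℤ → ℤ} (hw : IsSignedPerm n w) {x : Fin n → ℝ}
    (hx : x ∈ coneShiC n w) {i j : ℤ} (hi : i ∈ pmSet n) (hj : j ∈ pmSet n)
    (hij : i ≠ j) (h1 : 0 < w i) (h2 : w i ≤ |w j|) :
    Zc n w x i - Zc n w x j ≠ 1 := by
  obtain ⟨hc1, hc2, hc3⟩ := hx
  have hwi : w i ∈ pmSet n := hw.1.mapsTo hi
  have hwj : w j ∈ pmSet n := hw.1.mapsTo hj
  rw [mem_pm] at hwi hwj
  have hne : w i ≠ w j := fun h => hij (hw.1.injOn hi hj h)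
  have hZi : Zc n w x i = x ⟨(w i - 1).toNat, by omega⟩ := signedCoord_pos h1 (by omega)
  rcases lt_or_gt_of_ne hwj.1 with hb | hb
  · -- w j < 0
    have hZj : Zc n w x j = -x ⟨(-w j - 1).toNat, by omega⟩ :=
      signedCoord_negval hb (by omega)
    have h2' : w i ≤ -w j := by rw [abs_of_neg hb] at h2; exact h2
    rcases eq_or_lt_of_le h2' with he | hlt
    · -- 2 x_k case
      rw [hZi, hZj]
      have hfe : (⟨(-w j - 1).toNat, by omega⟩ : Fin n) = ⟨(w i - 1).toNat, by omega⟩ := by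
        apply Fin.ext; simp; omega
      rw [hfe]
      intro hcon
      exact hc3 ⟨(w i - 1).toNat, by omega⟩ (by linarith)
    · -- x_i + x_j case
      rw [hZi, hZj]
      have hAB : (⟨(w i - 1).toNat, by omega⟩ : Fin n) < ⟨(-w j - 1).toNat, by omega⟩ := by
        rw [Fin.mk_lt_mk]; omega
      have := (hc2 _ _ hAB).2
      intro hcon
      exact this (by linarith)
  · -- w j > 0
    have hZj : Zc n w x j = x ⟨(w j - 1).toNat, by omega⟩ := signedCoord_pos hb (by omega)
    have h2' : w i < w j := by rw [abs_of_pos hb] at h2; omega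
    rw [hZi, hZj]
    have hAB : (⟨(w i - 1).toNat, by omega⟩ : Fin n) < ⟨(w j - 1).toNat, by omega⟩ := by
      rw [Fin.mk_lt_mk]; omega
    have := (hc2 _ _ hAB).1
    intro hcon
    exact this (by linarith)

lemma qc_ne_one {n : ℕ} {w : ℤ → ℤ} (hw : IsSignedPerm n w) {x : Fin n → ℝ}
    (hx : x ∈ coneShiC n w) {p : ℤ × ℤ} (hp : QCmem n w p) :
    Zc n w x p.1 - Zc n w x p.2 ≠ 1 := by
  obtain ⟨hp1, hp2, hplt, hcase⟩ := hp
  rcases hcase with ⟨h1, h2⟩ | ⟨h1, h2⟩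
  · exact qc_ne_one_aux hw hx hp1 hp2 (by omega) h1 h2
  · have heq : Zc n w x p.1 - Zc n w x p.2 = Zc n w x (-p.2) - Zc n w x (-p.1) := by
      rw [Zc_neg hw, Zc_neg hw]; ring
    rw [heq]
    exact qc_ne_one_aux hw hx (pm_neg hp2) (pm_neg hp1) (by omega) h1 h2

lemma exists_g {n : ℕ} {w : ℤ → ℤ} (hw : IsSignedPerm n w) :
    ∃ g : ℤ → ℤ, (∀ m ∈ pmSet n, w (g m) = m) ∧ (∀ m ∈ pmSet n, g m ∈ pmSet n) ∧
      (∀ i ∈ pmSet n, g (w i) = i) ∧ (∀ m ∈ pmSet n, g (-m) = -g m) := by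
  refine ⟨Function.invFunOn w (pmSet n), fun m hm => hw.1.surjOn.rightInvOn_invFunOn hm,
    fun m hm => hw.1.surjOn.mapsTo_invFunOn hm, fun i hi => hw.1.injOn.leftInvOn_invFunOn hi, ?_⟩
  intro m hm
  set g := Function.invFunOn w (pmSet n) with hg
  have hgm : g m ∈ pmSet n := hw.1.surjOn.mapsTo_invFunOn hm
  have hgnm : g (-m) ∈ pmSet n := hw.1.surjOn.mapsTo_invFunOn (pm_neg hm)
  apply hw.1.injOn hgnm (pm_neg hgm)
  rw [hw.2.1 (g m), hw.1.surjOn.rightInvOn_invFunOn (pm_neg hm),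
    hw.1.surjOn.rightInvOn_invFunOn hm]

lemma cone_of_pattern {n : ℕ} {w : ℤ → ℤ} (hw : IsSignedPerm n w) {x : Fin n → ℝ}
    (hch : ∀ i j : ℤ, i ∈ pmSet n → j ∈ pmSet n → i < j → Zc n w x j < Zc n w x i)
    (hne : ∀ p : ℤ × ℤ, QCmem n w p → Zc n w x p.1 - Zc n w x p.2 ≠ 1) :
    x ∈ coneShiC n w := by
  obtain ⟨g, hg1, hg2, hg3, hg4⟩ := exists_g hw
  have hxg : ∀ m ∈ pmSet n, Zc n w x (g m) = signedCoord n x m := by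
    intro m hm; rw [Zc, hg1 m hm]
  have hxpos : ∀ (i : Fin n), signedCoord n x ((i : ℤ) + 1) = x i := by
    intro i
    rw [signedCoord_pos (by omega) (by have := i.isLt; omega)]
    congr 1
    apply Fin.ext
    simp
  have hapm : ∀ i : Fin n, ((i : ℤ) + 1) ∈ pmSet n := by
    intro i; rw [mem_pm]; have := i.isLt; omega
  refine ⟨hch, ?_, ?_⟩
  · intro i j hij
    set a : ℤ := (i : ℤ) + 1 with hadef
    set b : ℤ := (j : ℤ) + 1 with hbdef
    have hab : a < b := by simp only [hadef, hbdef]; exact_mod_cast by exact_mod_cast add_lt_add_left (by exact_mod_cast hij) 1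
    have ha := hapm i
    have hb := hapm j
    have ha' := ha; have hb' := hb
    rw [mem_pm] at ha' hb'
    constructor
    · -- x i - x j ≠ 1
      have hgab : g a ≠ g b := by
        intro h
        have : a = b := by rw [← hg1 a ha, ← hg1 b hb, h]
        omega
      have hxi : x i = Zc n w x (g a) := by rw [hxg a ha, hxpos]
      have hxj : x j = Zc n w x (g b) := by rw [hxg b hb, hxpos]
      rcases lt_or_gt_of_ne hgab with hlt | hgt
      · rw [hxi, hxj]
        apply hne (g a, g b)
        refine ⟨hg2 a ha, hg2 b hb, hlt, Or.inl ?_⟩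
        rw [hg1 a ha, hg1 b hb]
        constructor
        · omega
        · rw [abs_of_pos (by omega)]; omega
      · have := hch (g b) (g a) (hg2 b hb) (hg2 a ha) hgt
        rw [hxi, hxj]
        intro hcon; linarith
    · -- x i + x j ≠ 1
      have hnb : -b ∈ pmSet n := pm_neg hb
      have hgab : g a ≠ g (-b) := by
        intro h
        have : a = -b := by rw [← hg1 a ha, ← hg1 (-b) hnb, h]
        omega
      have hxi : x i = Zc n w x (g a) := by rw [hxg a ha, hxpos]
      have hxj : x j = -Zc n w x (g (-b)) := by
        rw [hxg (-b) hnb, signedCoord_neg, hxpos]; ring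
      rcases lt_or_gt_of_ne hgab with hlt | hgt
      · rw [hxi, hxj]
        have := hne (g a, g (-b)) ⟨hg2 a ha, hg2 (-b) hnb, hlt, Or.inl (by
          rw [hg1 a ha, hg1 (-b) hnb]
          exact ⟨by omega, by rw [abs_of_neg (by omega)]; omega⟩)⟩
        intro hcon
        exact this (by simp only []; linarith)
      · have := hch (g (-b)) (g a) (hg2 (-b) hnb) (hg2 a ha) hgt
        rw [hxi, hxj]
        intro hcon; linarith
  · intro k
    set a : ℤ := (k : ℤ) + 1 with hadef
    have ha := hapm k
    have hna : -a ∈ pmSet n := pm_neg ha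
    have hxk : x k = Zc n w x (g a) := by rw [hxg a ha, hxpos]
    have hxnk : Zc n w x (g (-a)) = -x k := by
      rw [hxg (-a) hna, signedCoord_neg, hxpos]
    have hgna : g (-a) = -g a := hg4 a ha
    have hgz : g a ≠ 0 := by
      have := hg2 a ha; rw [mem_pm] at this; exact this.1
    rcases lt_or_gt_of_ne hgz with hlt | hgt
    · -- g a < 0 : pair (g a, -g a)
      have := hne (g a, g (-a)) ⟨hg2 a ha, hg2 (-a) hna, by omega, Or.inl (by
        rw [hg1 a ha, hgna, hw.2.1, hg1 a ha]
        exact ⟨by omega, by rw [abs_of_neg (by omega)]; omega⟩)⟩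
      simp only at this
      rw [hxnk] at this
      rw [hxk] at this ⊢
      intro hcon
      exact this (by linarith)
    · -- g a > 0 : chamber gives 2 x k < 0
      have := hch (g (-a)) (g a) (hg2 (-a) hna) (hg2 a ha) (by omega)
      rw [hxnk, ← hxk] at this
      intro hcon; linarith

lemma phi_symFilter {n : ℕ} {w : ℤ → ℤ} (hw : IsSignedPerm n w) {x : Fin n → ℝ}
    (hx : x ∈ coneShiC n w) : SymFilter n w (phi n w x) := by
  have hmle : ∀ i j : ℤ, i ∈ pmSet n → j ∈ pmSet n → i ≤ j → Zc n w x j ≤ Zc n w x i := by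
    intro i j hi hj hij
    rcases eq_or_lt_of_le hij with rfl | hlt
    · exact le_refl _
    · exact le_of_lt (chamber_of_cone hx i j hi hj hlt)
  refine ⟨fun p hp => hp.1, ?_, ?_⟩
  · rintro p ⟨hpQ, hpgt⟩ q hqQ ⟨hle1, hle2⟩
    refine ⟨hqQ, ?_⟩
    have h1 := hmle q.1 p.1 hqQ.1 hpQ.1 hle1
    have h2 := hmle p.2 q.2 hpQ.2.1 hqQ.2.1 hle2
    linarith
  · rintro p ⟨hpQ, hpgt⟩
    refine ⟨qcmem_sig hpQ, ?_⟩
    simp only [sig]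
    rw [Zc_neg hw, Zc_neg hw]
    linarith

lemma exists_point_of_symFilter {n : ℕ} {w : ℤ → ℤ} (hw : IsSignedPerm n w)
    {F : Set (ℤ × ℤ)} (hF : SymFilter n w F) :
    ∃ x : Fin n → ℝ, x ∈ coneShiC n w ∧ phi n w x = F := by
  obtain ⟨z, hodd, hmono, hgtF, hinv⟩ := exists_good n hF
  obtain ⟨g, hg1, hg2, hg3, hg4⟩ := exists_g hw
  have hBk : ∀ i : ℤ, i ∈ pmSet n ↔ i ∈ Bk n := fun i => Iff.rfl
  set x : Fin n → ℝ := fun A => z (g ((A : ℤ) + 1)) with hxdef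
  have hxz : ∀ m ∈ pmSet n, signedCoord n x m = z (g m) := by
    intro m hm
    have hm' := hm; rw [mem_pm] at hm'
    rcases lt_or_gt_of_ne hm'.1 with hneg | hpos
    · rw [signedCoord_negval hneg (by omega)]
      have he : ((⟨(-m - 1).toNat, by omega⟩ : Fin n) : ℤ) + 1 = -m := by
        simp; omega
      simp only [hxdef]
      rw [he, hg4 m hm, hodd]
      ring
    · rw [signedCoord_pos hpos (by omega)]
      have he : ((⟨(m - 1).toNat, by omega⟩ : Fin n) : ℤ) + 1 = m := by
        simp; omega
      simp only [hxdef]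
      rw [he]
  have hZz : ∀ i ∈ pmSet n, Zc n w x i = z i := by
    intro i hi
    rw [Zc, hxz (w i) (hw.1.mapsTo hi), hg3 i hi]
  have hch : ∀ i j : ℤ, i ∈ pmSet n → j ∈ pmSet n → i < j → Zc n w x j < Zc n w x i := by
    intro i j hi hj hij
    rw [hZz i hi, hZz j hj]
    exact hmono i j hi hj hij
  have hQval : ∀ p : ℤ × ℤ, QCmem n w p → p ∉ F → Zc n w x p.1 - Zc n w x p.2 < 1 := by
    intro p hp hpF
    rw [hZz p.1 hp.1, hZz p.2 hp.2.1]
    exact hinv p.1 p.2 hp.1 hp.2.1 hp.2.2.1 ⟨p, hp, hpF, le_refl _, le_refl _⟩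
  have hFval : ∀ p ∈ F, 1 < Zc n w x p.1 - Zc n w x p.2 := by
    intro p hp
    have hpQ := hF.1 p hp
    rw [hZz p.1 hpQ.1, hZz p.2 hpQ.2.1]
    exact hgtF p hp hpQ.1 hpQ.2.1
  refine ⟨x, cone_of_pattern hw hch ?_, ?_⟩
  · intro p hp
    by_cases hpF : p ∈ F
    · have := hFval p hpF; linarith
    · have := hQval p hp hpF; linarith
  · ext p
    constructor
    · rintro ⟨hpQ, hpgt⟩
      by_contra hpF
      have := hQval p hpQ hpF
      linarith
    · intro hp
      exact ⟨hF.1 p hp, hFval p hp⟩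


/-! ### Part D : topology -/

lemma continuous_Zdiff (n : ℕ) (w : ℤ → ℤ) (p : ℤ × ℤ) :
    Continuous (fun x : ↥(coneShiC n w) => Zc n w ↑x p.1 - Zc n w ↑x p.2) := by
  unfold Zc
  exact ((continuous_signedCoord n (w p.1)).comp continuous_subtype_val).sub
    ((continuous_signedCoord n (w p.2)).comp continuous_subtype_val)

lemma isClopen_Sp {n : ℕ} {w : ℤ → ℤ} (hw : IsSignedPerm n w) {p : ℤ × ℤ}
    (hp : QCmem n w p) :
    IsClopen {x : ↥(coneShiC n w) | 1 < Zc n w ↑x p.1 - Zc n w ↑x p.2} := by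
  have hcont := continuous_Zdiff n w p
  constructor
  · -- closed
    rw [← isOpen_compl_iff]
    have hcompl : {x : ↥(coneShiC n w) | 1 < Zc n w ↑x p.1 - Zc n w ↑x p.2}ᶜ =
        {x : ↥(coneShiC n w) | Zc n w ↑x p.1 - Zc n w ↑x p.2 < 1} := by
      ext y
      simp only [Set.mem_compl_iff, Set.mem_setOf_eq, not_lt]
      constructor
      · intro hy
        exact lt_of_le_of_ne hy (qc_ne_one hw y.2 hp)
      · intro hy; exact le_of_lt hy
    rw [hcompl]
    exact isOpen_lt hcont continuous_const
  · exact isOpen_lt continuous_const hcont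

lemma phi_eq_of_mk_eq {n : ℕ} {w : ℤ → ℤ} (hw : IsSignedPerm n w)
    {a b : ↥(coneShiC n w)}
    (h : ConnectedComponents.mk a = ConnectedComponents.mk b) :
    phi n w ↑a = phi n w ↑b := by
  have hc : connectedComponent a = connectedComponent b := ConnectedComponents.coe_eq_coe.mp h
  ext p
  suffices H : ∀ u v : ↥(coneShiC n w), connectedComponent u = connectedComponent v →
      p ∈ phi n w ↑u → p ∈ phi n w ↑v from ⟨H a b hc, H b a hc.symm⟩
  rintro u v hcc ⟨hpQ, hgt⟩
  have hclop := isClopen_Sp hw hpQ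
  have hsub : connectedComponent u ⊆
      {x : ↥(coneShiC n w) | 1 < Zc n w ↑x p.1 - Zc n w ↑x p.2} :=
    hclop.connectedComponent_subset hgt
  have hv : v ∈ connectedComponent u := by
    rw [hcc]; exact mem_connectedComponent
  exact ⟨hpQ, hsub hv⟩

lemma mk_eq_of_phi_eq {n : ℕ} {w : ℤ → ℤ} (hw : IsSignedPerm n w)
    {a b : ↥(coneShiC n w)} (h : phi n w ↑a = phi n w ↑b) :
    ConnectedComponents.mk a = ConnectedComponents.mk b := by
  have hseg : segment ℝ (↑a : Fin n → ℝ) ↑b ⊆ coneShiC n w := by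
    rintro y ⟨s, u, hs, hu, hsu, rfl⟩
    have hZc : ∀ m : ℤ, Zc n w (s • (↑a : Fin n → ℝ) + u • ↑b) m =
        s * Zc n w ↑a m + u * Zc n w ↑b m := fun m => signedCoord_comb _ _ s u (w m)
    apply cone_of_pattern hw
    · intro i j hi hj hij
      rw [hZc, hZc]
      have h1 := chamber_of_cone a.2 i j hi hj hij
      have h2 := chamber_of_cone b.2 i j hi hj hij
      rcases eq_or_lt_of_le hs with hs0 | hs0
      · have hu1 : u = 1 := by linarith
        rw [← hs0, hu1]
        simpa using h2
      · have e1 : s * Zc n w ↑a j < s * Zc n w ↑a i := mul_lt_mul_of_pos_left h1 hs0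
        have e2 : u * Zc n w ↑b j ≤ u * Zc n w ↑b i := mul_le_mul_of_nonneg_left h2.le hu
        linarith
    · intro p hpQ
      rw [hZc, hZc]
      by_cases hpP : p ∈ phi n w ↑a
      · have hga : 1 < Zc n w ↑a p.1 - Zc n w ↑a p.2 := hpP.2
        have hgb : 1 < Zc n w ↑b p.1 - Zc n w ↑b p.2 := (h ▸ hpP).2
        intro hcon
        rcases eq_or_lt_of_le hs with hs0 | hs0
        · have hu1 : u = 1 := by linarith
          rw [← hs0, hu1] at hcon
          simp at hcon
          linarith
        · have e1 : s * 1 < s * (Zc n w ↑a p.1 - Zc n w ↑a p.2) :=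
            mul_lt_mul_of_pos_left hga hs0
          have e2 : u * 1 ≤ u * (Zc n w ↑b p.1 - Zc n w ↑b p.2) :=
            mul_le_mul_of_nonneg_left hgb.le hu
          nlinarith
      · have hpPb : p ∉ phi n w ↑b := h ▸ hpP
        have hda : Zc n w ↑a p.1 - Zc n w ↑a p.2 < 1 :=
          lt_of_le_of_ne (not_lt.mp fun hgt => hpP ⟨hpQ, hgt⟩) (qc_ne_one hw a.2 hpQ)
        have hdb : Zc n w ↑b p.1 - Zc n w ↑b p.2 < 1 :=
          lt_of_le_of_ne (not_lt.mp fun hgt => hpPb ⟨hpQ, hgt⟩) (qc_ne_one hw b.2 hpQ)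
        intro hcon
        rcases eq_or_lt_of_le hs with hs0 | hs0
        · have hu1 : u = 1 := by linarith
          rw [← hs0, hu1] at hcon
          simp at hcon
          linarith
        · have e1 : s * (Zc n w ↑a p.1 - Zc n w ↑a p.2) < s * 1 :=
            mul_lt_mul_of_pos_left hda hs0
          have e2 : u * (Zc n w ↑b p.1 - Zc n w ↑b p.2) ≤ u * 1 :=
            mul_le_mul_of_nonneg_left hdb.le hu
          nlinarith
  set T : Set ↥(coneShiC n w) := Subtype.val ⁻¹' (segment ℝ (↑a : Fin n → ℝ) ↑b) with hT
  have himg : (Subtype.val : ↥(coneShiC n w) → Fin n → ℝ) '' T =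
      segment ℝ (↑a : Fin n → ℝ) ↑b := by
    rw [hT, Subtype.image_preimage_coe]
    exact Set.inter_eq_self_of_subset_right hseg
  have hTpre : IsPreconnected T := by
    have h1 : IsPreconnected ((Subtype.val : ↥(coneShiC n w) → Fin n → ℝ) '' T) := by
      rw [himg]; exact (convex_segment _ _).isPreconnected
    exact (Topology.IsInducing.subtypeVal).isPreconnected_image.mp h1
  have haT : a ∈ T := by
    show (↑a : Fin n → ℝ) ∈ segment ℝ (↑a : Fin n → ℝ) ↑b
    exact left_mem_segment ℝ _ _
  have hbT : b ∈ T := by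
    show (↑b : Fin n → ℝ) ∈ segment ℝ (↑a : Fin n → ℝ) ↑b
    exact right_mem_segment ℝ _ _
  have hmem : b ∈ connectedComponent a := hTpre.subset_connectedComponent haT hbT
  exact ConnectedComponents.coe_eq_coe.mpr (connectedComponent_eq hmem)


end ShiC

/-- The number of connected components of the part of the complement of the type `C_n`
Shi arrangement in the cone `wC^{BC}` equals the number of symmetric antichains
of `Q^C_w`. -/
theorem card_components_coneShiC_eq_jQC (n : ℕ) (hn : 1 ≤ n) (w : ℤ → ℤ)
    (hw : IsSignedPerm n w) :
    Nat.card (ConnectedComponents ↥(coneShiC n w)) = jQC n w := by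
  classical
  have hreal : ∀ F : {F : Set (ℤ × ℤ) // ShiC.SymFilter n w F},
      ∃ a : ↥(coneShiC n w), ShiC.phi n w ↑a = F.1 := by
    intro F
    obtain ⟨x, hx, hphi⟩ := ShiC.exists_point_of_symFilter hw F.2
    exact ⟨⟨x, hx⟩, hphi⟩
  choose pt hpt using hreal
  have hbij : Function.Bijective
      (fun F : {F : Set (ℤ × ℤ) // ShiC.SymFilter n w F} => ConnectedComponents.mk (pt F)) := by
    constructor
    · intro F F' hFF
      apply Subtype.ext
      rw [← hpt F, ← hpt F']
      exact ShiC.phi_eq_of_mk_eq hw hFF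
    · intro c
      obtain ⟨a, rfl⟩ := ConnectedComponents.surjective_coe c
      refine ⟨⟨ShiC.phi n w ↑a, ShiC.phi_symFilter hw a.2⟩, ?_⟩
      apply ShiC.mk_eq_of_phi_eq hw
      rw [hpt]
  calc Nat.card (ConnectedComponents ↥(coneShiC n w))
      = Nat.card {F : Set (ℤ × ℤ) // ShiC.SymFilter n w F} :=
        (Nat.card_congr (Equiv.ofBijective _ hbij)).symm
    _ = Nat.card {A : Set (ℤ × ℤ) // IsSymAntichainQC n w A} :=
        Nat.card_congr (ShiC.filterAntichainEquiv n w)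
    _ = jQC n w := rfl
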